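/- Let G be a compact topological group and μ a regular Borel probability measure on G that is idempotent under convolution: μ * μ = μ. Then μ is the normalized Haar measure of the closed subgroup H = supp μ of G. -/

import Mathlib

open MeasureTheory Set

/-- The (topological) support of a Borel measure. -/
def measSupport {X : Type*} [TopologicalSpace X] [MeasurableSpace X]
    (μ : Measure X) : Set X :=
  {x | ∀ U : Set X, IsOpen U → x ∈ U → 0 < μ U}

-- lower semicontinuity of x ↦ μ {y | x * y ∈ U} for U open
lemma lsc_aux {G : Type*} [Group G] [TopologicalSpace G] [IsTopologicalGroup G]
    [MeasurableSpace G] [BorelSpace G] (μ : Measure G) [μ.Regular]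
    {U : Set G} (hU : IsOpen U) :
    LowerSemicontinuous (fun x : G => μ {y | x * y ∈ U}) := by
  intro x₀ t ht
  have hopen : IsOpen {y : G | x₀ * y ∈ U} := hU.preimage (continuous_mul_left x₀)
  obtain ⟨K, hKsub, hKcomp, hKt⟩ :=
    (Measure.Regular.innerRegular (μ := μ)) hopen t ht
  have hn : IsOpen ((fun p : G × G => p.1 * p.2) ⁻¹' U) := hU.preimage continuous_mul
  have hp : ({x₀} ×ˢ K : Set (G × G)) ⊆ (fun p : G × G => p.1 * p.2) ⁻¹' U := by
    rintro ⟨a, k⟩ ⟨ha, hk⟩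
    simp only [mem_singleton_iff] at ha
    subst ha
    exact hKsub hk
  obtain ⟨u, v, huo, hvo, hxu, hKv, huv⟩ :=
    generalized_tube_lemma isCompact_singleton hKcomp hn hp
  filter_upwards [huo.mem_nhds (hxu rfl)] with x hx
  refine lt_of_lt_of_le hKt (measure_mono ?_)
  intro k hk
  exact huv (Set.mk_mem_prod hx (hKv hk))

-- a lower semicontinuous function attains its minimum on a nonempty compact set
lemma lsc_min {G : Type*} [TopologicalSpace G] [T2Space G] {f : G → ENNReal}
    (hf : LowerSemicontinuous f) {K : Set G} (hK : IsCompact K) (hne : K.Nonempty) :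
    ∃ a ∈ K, ∀ x ∈ K, f a ≤ f x := by
  set M : ENNReal := ⨅ x ∈ K, f x with hM
  have hMle : ∀ x ∈ K, M ≤ f x := fun x hx => biInf_le f hx
  by_cases htop : M = ⊤
  · obtain ⟨a, ha⟩ := hne
    exact ⟨a, ha, fun x hx => by
      have := hMle x hx
      rw [htop, top_le_iff] at this
      simp [this]⟩
  · have hι : Nonempty {t : ENNReal // M < t} := ⟨⟨⊤, lt_top_iff_ne_top.2 htop⟩⟩
    set C : {t : ENNReal // M < t} → Set G := fun t => K ∩ {x | f x ≤ t.1} with hC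
    have hCne : ∀ t, (C t).Nonempty := by
      rintro ⟨t, htM⟩
      have : ⨅ x ∈ K, f x < t := htM
      rw [iInf_lt_iff] at this
      obtain ⟨x, hx⟩ := this
      rw [iInf_lt_iff] at hx
      obtain ⟨hxK, hxt⟩ := hx
      exact ⟨x, hxK, le_of_lt hxt⟩
    have hCcl : ∀ t, IsClosed (C t) := fun t =>
      (hK.isClosed).inter (hf.isClosed_preimage t.1)
    have hCcomp : ∀ t, IsCompact (C t) := fun t => hK.inter_right (hf.isClosed_preimage t.1)
    have hdir : Directed (· ⊇ ·) C := by
      rintro ⟨t₁, h₁⟩ ⟨t₂, h₂⟩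
      refine ⟨⟨min t₁ t₂, lt_min h₁ h₂⟩, ?_, ?_⟩
      · rintro x ⟨hxK, hx⟩
        exact ⟨hxK, show f x ≤ t₁ from le_trans hx (min_le_left _ _)⟩
      · rintro x ⟨hxK, hx⟩
        exact ⟨hxK, show f x ≤ t₂ from le_trans hx (min_le_right _ _)⟩
    obtain ⟨a, ha⟩ := IsCompact.nonempty_iInter_of_directed_nonempty_isCompact_isClosed
      C hdir hCne hCcomp hCcl
    simp only [Set.mem_iInter] at ha
    have haK : a ∈ K := (ha ⟨⊤, lt_top_iff_ne_top.2 htop⟩).1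
    have haM : f a ≤ M := by
      refine le_of_forall_gt_imp_ge_of_dense fun t htM => ?_
      exact (ha ⟨t, htM⟩).2
    exact ⟨a, haK, fun x hx => le_trans haM (hMle x hx)⟩


/-- A convolution-idempotent regular Borel probability measure on a compact group is the
normalized Haar measure of the closed subgroup `H = supp μ`: its support is a closed subgroup
and it is invariant under translations by elements of that subgroup. -/
theorem stmt_17 {G : Type*} [Group G] [TopologicalSpace G] [IsTopologicalGroup G]
    [CompactSpace G] [T2Space G] [MeasurableSpace G] [BorelSpace G]
    (hm : Measurable fun p : G × G => p.1 * p.2)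
    (μ : Measure G) [IsProbabilityMeasure μ] [μ.Regular]
    (hidem : Measure.map (fun p : G × G => p.1 * p.2) (μ.prod μ) = μ) :
    ∃ H : Subgroup G, IsClosed (H : Set G) ∧ measSupport μ = (H : Set G) ∧
      ∀ h ∈ H, Measure.map (fun x => h * x) μ = μ := by
  set S := measSupport μ with hSdef
  -- characterization of the complement
  have hcompl : ∀ x : G, x ∈ Sᶜ ↔ ∃ U : Set G, IsOpen U ∧ x ∈ U ∧ μ U = 0 := by
    intro x
    simp only [hSdef, measSupport, mem_compl_iff, mem_setOf_eq]
    push_neg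
    refine exists_congr fun U => ?_
    simp [not_lt, le_zero_iff, and_assoc]
  -- S is closed
  have hSclosed : IsClosed S := by
    rw [← isOpen_compl_iff, isOpen_iff_forall_mem_open]
    intro x hx
    obtain ⟨U, hUo, hxU, hU0⟩ := (hcompl x).1 hx
    exact ⟨U, fun y hy => (hcompl y).2 ⟨U, hUo, hy, hU0⟩, hUo, hxU⟩
  -- μ vanishes on the complement of S
  have hScompl0 : μ Sᶜ = 0 := by
    by_contra h0
    have hpos : 0 < μ Sᶜ := pos_iff_ne_zero.2 h0
    obtain ⟨K, hKsub, hKcomp, hKpos⟩ :=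
      (Measure.Regular.innerRegular (μ := μ)) hSclosed.isOpen_compl 0 hpos
    have hex : ∀ x : G, ∃ U : Set G, IsOpen U ∧ (x ∈ Sᶜ → x ∈ U ∧ μ U = 0) := by
      intro x
      by_cases hx : x ∈ Sᶜ
      · obtain ⟨U, hUo, hxU, hU0⟩ := (hcompl x).1 hx
        exact ⟨U, hUo, fun _ => ⟨hxU, hU0⟩⟩
      · exact ⟨∅, isOpen_empty, fun h => absurd h hx⟩
    choose u huo hu using hex
    obtain ⟨t, htK, hcover⟩ := hKcomp.elim_nhds_subcover u
      (fun x hx => (huo x).mem_nhds (hu x (hKsub hx)).1)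
    have hle : μ K ≤ ∑ x ∈ t, μ (u x) :=
      le_trans (measure_mono hcover) (measure_biUnion_finset_le t u)
    have hsum : ∑ x ∈ t, μ (u x) = 0 :=
      Finset.sum_eq_zero fun x hxt => (hu x (hKsub (htK x hxt))).2
    rw [hsum] at hle
    exact absurd (le_antisymm hle (zero_le)) (ne_of_gt hKpos)
  have hae : ∀ᵐ x ∂μ, x ∈ S := by
    rw [MeasureTheory.ae_iff]
    exact hScompl0
  -- S is nonempty
  have hSne : S.Nonempty := by
    rcases Set.eq_empty_or_nonempty S with h | h
    · exfalso
      have : μ Sᶜ = 1 := by rw [h, Set.compl_empty, measure_univ]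
      rw [hScompl0] at this
      exact zero_ne_one this
    · exact h
  have hScomp : IsCompact S := hSclosed.isCompact
  -- S is closed under multiplication
  have hmulS : ∀ x ∈ S, ∀ y ∈ S, x * y ∈ S := by
    intro x hx y hy U hUo hxyU
    have hopen : IsOpen ((fun p : G × G => p.1 * p.2) ⁻¹' U) := hUo.preimage continuous_mul
    obtain ⟨V, W, hVo, hWo, hxV, hyW, hVW⟩ := isOpen_prod_iff.1 hopen x y hxyU
    have h1 : μ U = (μ.prod μ) ((fun p : G × G => p.1 * p.2) ⁻¹' U) := by
      conv_lhs => rw [← hidem]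
      rw [Measure.map_apply hm hUo.measurableSet]
    have h2 : (μ.prod μ) (V ×ˢ W) ≤ (μ.prod μ) ((fun p : G × G => p.1 * p.2) ⁻¹' U) :=
      measure_mono hVW
    rw [h1]
    refine lt_of_lt_of_le ?_ h2
    rw [Measure.prod_prod]
    exact ENNReal.mul_pos (hx V hVo hxV).ne' (hy W hWo hyW).ne'
  -- 1 ∈ S
  have honeS : (1 : G) ∈ S := by
    obtain ⟨m, hmS, hmm⟩ := exists_idempotent_in_compact_subsemigroup
      (fun r => continuous_mul_right r) S hSne hScomp hmulS
    have : m = 1 := by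
      have := hmm
      rwa [mul_eq_right] at this
    rwa [this] at hmS
  -- powers of elements of S lie in S
  have hpowS : ∀ a ∈ S, ∀ n : ℕ, a ^ (n + 1) ∈ S := by
    intro a ha n
    induction n with
    | zero => simpa using ha
    | succ k ih =>
      have : a ^ (k + 1 + 1) = a ^ (k + 1) * a := by rw [pow_succ]
      rw [this]
      exact hmulS _ ih _ ha
  -- inverses
  have hinvS : ∀ a ∈ S, a⁻¹ ∈ S := by
    intro a ha
    set P : Set G := Set.range (fun n : ℕ => a ^ (n + 2)) with hP
    have hPS : P ⊆ S := by
      rintro _ ⟨n, rfl⟩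
      exact hpowS a ha (n + 1)
    have hPne : P.Nonempty := ⟨a ^ 2, 0, rfl⟩
    set T : Set G := closure P with hT
    have hTS : T ⊆ S := hSclosed.closure_subset_iff.2 hPS
    have hTcomp : IsCompact T := isClosed_closure.isCompact
    have hTmul : ∀ x ∈ T, ∀ y ∈ T, x * y ∈ T := by
      intro x hx y hy
      refine map_mem_closure₂ continuous_mul hx hy ?_
      rintro _ ⟨n, rfl⟩ _ ⟨k, rfl⟩
      exact ⟨n + k + 2, by rw [← pow_add]; ring_nf⟩
    obtain ⟨e, heT, hee⟩ := exists_idempotent_in_compact_subsemigroup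
      (fun r => continuous_mul_right r) T (hPne.closure) hTcomp hTmul
    have he1 : e = 1 := by rwa [mul_eq_right] at hee
    rw [he1] at heT
    -- 1 ∈ closure P ⇒ a⁻¹ ∈ closure ((a⁻¹ * ·) '' P) ⊆ S
    have : a⁻¹ * 1 ∈ closure ((fun x => a⁻¹ * x) '' P) :=
      map_mem_closure (continuous_mul_left a⁻¹) heT (Set.mapsTo_image _ _)
    rw [mul_one] at this
    have himg : (fun x => a⁻¹ * x) '' P ⊆ S := by
      rintro _ ⟨_, ⟨n, rfl⟩, rfl⟩
      show a⁻¹ * a ^ (n + 2) ∈ S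
      have : a⁻¹ * a ^ (n + 2) = a ^ (n + 1) := by
        rw [pow_succ' a (n+1)]
        group
      rw [this]
      exact hpowS a ha n
    exact hSclosed.closure_subset_iff.2 himg this
  -- the subgroup
  refine ⟨{ carrier := S,
            mul_mem' := fun {x y} hx hy => hmulS x hx y hy,
            one_mem' := honeS,
            inv_mem' := fun {x} hx => hinvS x hx }, hSclosed, rfl, ?_⟩
  intro h hh
  have hhS : h ∈ S := hh
  -- key identity: for measurable V, μ V = ∫⁻ x, μ {y | x * y ∈ V} ∂μ
  have hident : ∀ g : G, ∀ {U : Set G}, IsOpen U →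
      μ {y | g * y ∈ U} = ∫⁻ x, μ {y | (g * x) * y ∈ U} ∂μ := by
    intro g U hUo
    have hVmeas : MeasurableSet {y : G | g * y ∈ U} :=
      (hUo.preimage (continuous_mul_left g)).measurableSet
    have h1 : μ {y | g * y ∈ U} =
        (μ.prod μ) ((fun p : G × G => p.1 * p.2) ⁻¹' {y | g * y ∈ U}) := by
      conv_lhs => rw [← hidem]
      rw [Measure.map_apply hm hVmeas]
    rw [h1, Measure.prod_apply (hm hVmeas)]
    refine lintegral_congr fun x => ?_
    congr 1
    ext y
    simp [mul_assoc]
  -- invariance on open sets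
  have hopen_inv : ∀ U : Set G, IsOpen U → μ ((fun x => h * x) ⁻¹' U) = μ U := by
    intro U hUo
    set ψ : G → ENNReal := fun x => μ {y | x * y ∈ U} with hψ
    have hψlsc : LowerSemicontinuous ψ := lsc_aux μ hUo
    obtain ⟨g₀, hg₀S, hg₀min⟩ := lsc_min hψlsc hScomp hSne
    set M : ENNReal := ψ g₀ with hMdef
    have hMfin : M ≠ ⊤ := by
      refine ne_of_lt (lt_of_le_of_lt (measure_mono (Set.subset_univ _)) ?_)
      rw [measure_univ]; exact ENNReal.one_lt_top
    set f : G → ENNReal := fun x => ψ (g₀ * x) with hf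
    have hflsc : LowerSemicontinuous f :=
      hψlsc.comp (continuous_mul_left g₀)
    have hfmeas : Measurable f := hflsc.measurable
    have hint : ∫⁻ x, f x ∂μ = M := (hident g₀ hUo).symm
    have haege : ∀ᵐ x ∂μ, M ≤ f x := by
      filter_upwards [hae] with x hx
      exact hg₀min _ (hmulS g₀ hg₀S x hx)
    -- conclude f ≤ M a.e.
    have haele : ∀ᵐ x ∂μ, f x ≤ M := by
      have hconst : ∫⁻ _, M ∂μ = M := by rw [lintegral_const, measure_univ, mul_one]
      have hsub : ∫⁻ x, f x - M ∂μ = 0 := by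
        rw [lintegral_sub measurable_const (by rw [hconst]; exact hMfin) haege,
          hint, hconst, tsub_self]
      have := (lintegral_eq_zero_iff (hfmeas.sub measurable_const)).1 hsub
      filter_upwards [this] with x hx
      exact tsub_eq_zero_iff_le.1 hx
    -- the closed set {f ≤ M} contains S
    have hclosed : IsClosed {x | f x ≤ M} := hflsc.isClosed_preimage M
    have hSsub : S ⊆ {x | f x ≤ M} := by
      intro s hs
      by_contra hns
      have hno : IsOpen {x | f x ≤ M}ᶜ := hclosed.isOpen_compl
      have h0 : μ ({x | f x ≤ M}ᶜ) = 0 := by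
        have := MeasureTheory.ae_iff.1 haele
        simpa [Set.compl_setOf] using this
      exact absurd (hs _ hno hns) (by simp [h0])
    -- hence ψ is constant equal to M on S
    have hψconst : ∀ x ∈ S, ψ x = M := by
      intro x hx
      have hx' : g₀⁻¹ * x ∈ S := hmulS _ (hinvS g₀ hg₀S) _ hx
      have h1 : f (g₀⁻¹ * x) ≤ M := hSsub hx'
      have h2 : M ≤ f (g₀⁻¹ * x) := hg₀min _ (hmulS g₀ hg₀S _ hx')
      have : f (g₀⁻¹ * x) = ψ x := by
        simp only [hf]
        congr 1
        group
      rw [this] at h1 h2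
      exact le_antisymm h1 h2
    have hψ1 : ψ 1 = μ U := by
      simp only [hψ]
      congr 1
      ext y; simp
    have : ψ h = ψ 1 := by rw [hψconst h hhS, hψconst 1 honeS]
    rw [hψ1] at this
    calc μ ((fun x => h * x) ⁻¹' U) = ψ h := rfl
      _ = μ U := this
  -- conclude equality of measures via the π-system of open sets
  have hmeas : Measurable fun x : G => h * x := (continuous_mul_left h).measurable
  haveI : IsProbabilityMeasure (Measure.map (fun x => h * x) μ) :=
    Measure.isProbabilityMeasure_map hmeas.aemeasurable
  refine MeasureTheory.ext_of_generate_finite {s : Set G | IsOpen s} ?_ isPiSystem_isOpen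
    ?_ ?_
  · exact BorelSpace.measurable_eq (α := G)
  · intro s hs
    rw [Measure.map_apply hmeas hs.measurableSet]
    exact hopen_inv s hs
  · simp
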